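/- Suppose the dummy qubit is prepared at the server with fidelity F_dummy, then stored in a depolarizing memory with coherence time T for a random time Δt with E[Δt] = 1/R, after which the trap qubit is prepared with fidelity F_trap; assume F_dummy(1-F_trap) + F_trap(1-F_dummy) ≤ 1/2 and that F_dummy, F_trap, Δt are independent random variables with means F̄_dummy, F̄_trap, 1/R. Then the average test-round failure probability satisfies q ≤ e^{-1/(RT)}[F̄_dummy(1-F̄_trap) + F̄_trap(1-F̄_dummy)] + (1 - e^{-1/(RT)})/2. -/

import Mathlib

open MeasureTheory ProbabilityTheory

/-- Independence is preserved under a.e. modification of the random variables. -/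
lemma iIndepFun_ae_eq {Ω : Type*} [MeasurableSpace Ω] {μ : Measure Ω}
    {ι : Type*} {β : ι → Type*} {m : ∀ i, MeasurableSpace (β i)} {f f' : ∀ i, Ω → β i}
    (h : iIndepFun (m := m) f μ) (hff' : ∀ i, f i =ᵐ[μ] f' i) : iIndepFun (m := m) f' μ := by
  rw [iIndepFun_iff_measure_inter_preimage_eq_mul] at h ⊢
  intro S sets H
  have h1 : ∀ i : ι, f i ⁻¹' sets i =ᵐ[μ] f' i ⁻¹' sets i := fun i =>
    Filter.eventuallyEq_set.2 ((hff' i).mono fun ω hω => by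
      simp only [Set.mem_preimage, hω])
  have h2 : (⋂ i ∈ S, f i ⁻¹' sets i) =ᵐ[μ] ⋂ i ∈ S, f' i ⁻¹' sets i := by
    refine Filter.eventuallyEq_set.2 ?_
    have : ∀ᵐ ω ∂μ, ∀ i ∈ (S : Set ι), (ω ∈ f i ⁻¹' sets i ↔ ω ∈ f' i ⁻¹' sets i) := by
      rw [ae_ball_iff S.countable_toSet]
      intro i _
      exact Filter.eventuallyEq_set.1 (h1 i)
    filter_upwards [this] with ω hω
    simp only [Set.mem_iInter]
    exact ⟨fun hh i hi => (hω i hi).1 (hh i hi), fun hh i hi => (hω i hi).2 (hh i hi)⟩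
  rw [← measure_congr h2, h S H]
  exact Finset.prod_congr rfl fun i _ => measure_congr (h1 i)

/-- bound on the average VBQC test-round failure probability.
The per-round failure probability is
`p_fail = e^{-Δt/T}[F_d(1-F_t) + F_t(1-F_d)] + (1 - e^{-Δt/T})/2`;
with `F_d, F_t, Δt` independent, `E[F_d] = F̄_d`, `E[F_t] = F̄_t`, `E[Δt] = 1/R`
and `F̄_d(1-F̄_t) + F̄_t(1-F̄_d) ≤ 1/2`, the average failure probability is at most
`e^{-1/(RT)}[F̄_d(1-F̄_t) + F̄_t(1-F̄_d)] + (1 - e^{-1/(RT)})/2`. -/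
theorem vbqc_average_failure_probability_bound
    {Ω : Type*} [MeasurableSpace Ω] (μ : Measure Ω) [IsProbabilityMeasure μ]
    (Fd Ft Δt : Ω → ℝ)
    (hFd01 : ∀ ω, Fd ω ∈ Set.Icc (0 : ℝ) 1)
    (hFt01 : ∀ ω, Ft ω ∈ Set.Icc (0 : ℝ) 1)
    (hΔt : ∀ ω, 0 ≤ Δt ω)
    (hiFd : Integrable Fd μ) (hiFt : Integrable Ft μ) (hiΔt : Integrable Δt μ)
    (hindep : iIndepFun ![Fd, Ft, Δt] μ)
    (R T FdBar FtBar : ℝ) (hR : 0 < R) (hT : 0 < T)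
    (hmFd : ∫ ω, Fd ω ∂μ = FdBar) (hmFt : ∫ ω, Ft ω ∂μ = FtBar)
    (hmΔt : ∫ ω, Δt ω ∂μ = 1 / R)
    (hhalf : FdBar * (1 - FtBar) + FtBar * (1 - FdBar) ≤ 1 / 2) :
    (∫ ω, (Real.exp (-(Δt ω / T)) * (Fd ω * (1 - Ft ω) + Ft ω * (1 - Fd ω)) +
        (1 - Real.exp (-(Δt ω / T))) / 2) ∂μ) ≤
      Real.exp (-(1 / (R * T))) * (FdBar * (1 - FtBar) + FtBar * (1 - FdBar)) +
        (1 - Real.exp (-(1 / (R * T)))) / 2 := by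
  classical
  -- measurable modifications
  set Fd' : Ω → ℝ := hiFd.1.mk Fd with hFd'def
  set Ft' : Ω → ℝ := hiFt.1.mk Ft with hFt'def
  set Δt' : Ω → ℝ := hiΔt.1.mk Δt with hΔt'def
  have hmeasFd : Measurable Fd' := hiFd.1.stronglyMeasurable_mk.measurable
  have hmeasFt : Measurable Ft' := hiFt.1.stronglyMeasurable_mk.measurable
  have hmeasΔt : Measurable Δt' := hiΔt.1.stronglyMeasurable_mk.measurable
  have haeFd : Fd =ᵐ[μ] Fd' := hiFd.1.ae_eq_mk
  have haeFt : Ft =ᵐ[μ] Ft' := hiFt.1.ae_eq_mk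
  have haeΔt : Δt =ᵐ[μ] Δt' := hiΔt.1.ae_eq_mk
  have hiFd' : Integrable Fd' μ := hiFd.congr haeFd
  have hiFt' : Integrable Ft' μ := hiFt.congr haeFt
  have hiΔt' : Integrable Δt' μ := hiΔt.congr haeΔt
  -- transfer independence
  have hae : ∀ i : Fin 3, (![Fd, Ft, Δt] i) =ᵐ[μ] (![Fd', Ft', Δt'] i) := by
    intro i
    fin_cases i <;> simpa using (by assumption : _)
  have hindep' : iIndepFun ![Fd', Ft', Δt'] μ :=
    iIndepFun_ae_eq hindep hae
  have hmeas' : ∀ i : Fin 3, Measurable (![Fd', Ft', Δt'] i) := by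
    intro i; fin_cases i <;> assumption
  -- ae bounds for primed versions
  have hFd01' : ∀ᵐ ω ∂μ, Fd' ω ∈ Set.Icc (0 : ℝ) 1 := by
    filter_upwards [haeFd] with ω hω; rw [← hω]; exact hFd01 ω
  have hFt01' : ∀ᵐ ω ∂μ, Ft' ω ∈ Set.Icc (0 : ℝ) 1 := by
    filter_upwards [haeFt] with ω hω; rw [← hω]; exact hFt01 ω
  have hΔt' : ∀ᵐ ω ∂μ, 0 ≤ Δt' ω := by
    filter_upwards [haeΔt] with ω hω; rw [← hω]; exact hΔt ω
  -- abbreviations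
  set c : ℝ := Real.exp (-(1 / (R * T))) with hc
  set M : ℝ := FdBar * (1 - FtBar) + FtBar * (1 - FdBar) with hM
  set E : Ω → ℝ := fun ω => Real.exp (-(Δt' ω / T)) with hE
  set Y : Ω → ℝ := fun ω => Fd' ω * (1 - Ft' ω) + Ft' ω * (1 - Fd' ω) with hY
  have hmeasE : Measurable E := (Real.continuous_exp.measurable).comp
    ((hmeasΔt.div_const T).neg)
  have hmeasY : Measurable Y :=
    ((hmeasFd.mul (measurable_const.sub hmeasFt))).add
      (hmeasFt.mul (measurable_const.sub hmeasFd))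
  -- bounds
  have hEbd : ∀ᵐ ω ∂μ, E ω ∈ Set.Icc (0 : ℝ) 1 := by
    filter_upwards [hΔt'] with ω hω
    constructor
    · exact (Real.exp_pos _).le
    · rw [← Real.exp_zero]
      apply Real.exp_le_exp.2
      simp only [neg_nonpos]
      positivity
  have hYbd : ∀ᵐ ω ∂μ, |Y ω - 1/2| ≤ 1/2 := by
    filter_upwards [hFd01', hFt01'] with ω ⟨h1, h2⟩ ⟨h3, h4⟩
    rw [abs_le]
    constructor <;> simp only [hY] <;> nlinarith
  -- integrabilities
  have hiE : Integrable E μ := by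
    refine (integrable_const (1 : ℝ)).mono' hmeasE.aestronglyMeasurable ?_
    filter_upwards [hEbd] with ω ⟨h1, h2⟩
    rw [Real.norm_eq_abs, abs_of_nonneg h1]; exact h2
  have hiYm : Integrable (fun ω => Y ω - 1/2) μ := by
    refine (integrable_const (1/2 : ℝ)).mono'
      ((hmeasY.sub measurable_const).aestronglyMeasurable) ?_
    filter_upwards [hYbd] with ω hω
    simpa using hω
  have hiEY : Integrable (fun ω => E ω * (Y ω - 1/2)) μ := by
    refine (integrable_const (1/2 : ℝ)).mono'
      ((hmeasE.mul (hmeasY.sub measurable_const)).aestronglyMeasurable) ?_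
    filter_upwards [hEbd, hYbd] with ω ⟨h1, h2⟩ hω
    rw [Real.norm_eq_abs, abs_mul, abs_of_nonneg h1]
    calc E ω * |Y ω - 1/2| ≤ 1 * (1/2) := by
          apply mul_le_mul h2 hω (abs_nonneg _) zero_le_one
      _ = 1/2 := by ring
  -- independence of E and Y - 1/2
  have hindepEY : IndepFun (fun ω => Y ω - 1/2) E μ := by
    have h1 : IndepFun (fun ω => (Fd' ω, Ft' ω)) Δt' μ := by
      have := hindep'.indepFun_prodMk hmeas' 0 1 2 (by decide) (by decide)
      simpa using this
    have := h1.comp (φ := fun p : ℝ × ℝ => p.1 * (1 - p.2) + p.2 * (1 - p.1) - 1/2)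
      (ψ := fun t : ℝ => Real.exp (-(t / T)))
      (((measurable_fst.mul (measurable_const.sub measurable_snd)).add
        (measurable_snd.mul (measurable_const.sub measurable_fst))).sub measurable_const)
      (Real.continuous_exp.measurable.comp ((measurable_id.div_const T).neg))
    exact this
  -- means of primed versions
  have hmFd' : ∫ ω, Fd' ω ∂μ = FdBar := by rw [← integral_congr_ae haeFd, hmFd]
  have hmFt' : ∫ ω, Ft' ω ∂μ = FtBar := by rw [← integral_congr_ae haeFt, hmFt]
  have hmΔt'' : ∫ ω, Δt' ω ∂μ = 1 / R := by rw [← integral_congr_ae haeΔt, hmΔt]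
  -- mean of Y
  have hindepFdFt : IndepFun Fd' Ft' μ := by
    have := hindep'.indepFun (i := 0) (j := 1) (by decide)
    simpa using this
  have hprod : ∫ ω, Fd' ω * Ft' ω ∂μ = FdBar * FtBar := by
    rw [show (fun ω => Fd' ω * Ft' ω) = fun ω => Fd' ω * Ft' ω from rfl]
    have := hindepFdFt.integral_mul_eq_mul_integral hiFd'.aestronglyMeasurable hiFt'.aestronglyMeasurable
    simpa [Pi.mul_apply, hmFd', hmFt'] using this
  have hiProd : Integrable (fun ω => Fd' ω * Ft' ω) μ := by
    refine (integrable_const (1 : ℝ)).mono'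
      ((hmeasFd.mul hmeasFt).aestronglyMeasurable) ?_
    filter_upwards [hFd01', hFt01'] with ω ⟨h1, h2⟩ ⟨h3, h4⟩
    rw [Real.norm_eq_abs, abs_mul, abs_of_nonneg h1, abs_of_nonneg h3]
    calc Fd' ω * Ft' ω ≤ 1 * 1 := by apply mul_le_mul h2 h4 h3 zero_le_one
      _ = 1 := by ring
  have hmY : ∫ ω, Y ω ∂μ = M := by
    have : (fun ω => Y ω) = fun ω => Fd' ω + Ft' ω - 2 * (Fd' ω * Ft' ω) := by
      funext ω; simp only [hY]; ring
    rw [this, integral_sub ((hiFd'.add hiFt').congr (by filter_upwards with ω; simp))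
      (hiProd.const_mul 2), integral_add hiFd' hiFt', integral_const_mul, hprod,
      hmFd', hmFt', hM]
    ring
  have hiY : Integrable Y μ := by
    have h := hiYm.add (integrable_const (1/2 : ℝ))
    exact h.congr (by filter_upwards with ω; simp)
  have hmYm : ∫ ω, (Y ω - 1/2) ∂μ = M - 1/2 := by
    rw [integral_sub hiY (integrable_const _), hmY, integral_const]
    simp
  -- rewrite the goal integrand
  have hLHS : (∫ ω, (Real.exp (-(Δt ω / T)) * (Fd ω * (1 - Ft ω) + Ft ω * (1 - Fd ω)) +
      (1 - Real.exp (-(Δt ω / T))) / 2) ∂μ) = ∫ ω, (E ω * (Y ω - 1/2) + 1/2) ∂μ := by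
    apply integral_congr_ae
    filter_upwards [haeFd, haeFt, haeΔt] with ω h1 h2 h3
    simp only [hE, hY, h1, h2, h3]
    ring
  have hsplit : ∫ ω, (E ω * (Y ω - 1/2) + 1/2) ∂μ
      = (∫ ω, E ω ∂μ) * (M - 1/2) + 1/2 := by
    rw [integral_add hiEY (integrable_const _), integral_const]
    have h2 := hindepEY.symm.integral_mul_eq_mul_integral hiE.aestronglyMeasurable hiYm.aestronglyMeasurable
    have h3 : ∫ ω, E ω * (Y ω - 1/2) ∂μ = (∫ ω, E ω ∂μ) * (M - 1/2) := by
      rw [show (fun ω => E ω * (Y ω - 1/2)) = (E * fun ω => Y ω - 1/2) from rfl, h2, hmYm]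
    rw [h3]
    simp
  -- Jensen: c ≤ ∫ E
  have hiLin : Integrable (fun ω => c * (1 + (1/R - Δt' ω)/T)) μ := by
    apply Integrable.const_mul
    apply Integrable.add (integrable_const _)
    exact ((integrable_const (1/R : ℝ)).sub hiΔt').div_const T
  have hcE : c ≤ ∫ ω, E ω ∂μ := by
    have hpt : ∀ ω, c * (1 + (1/R - Δt' ω)/T) ≤ E ω := by
      intro ω
      have h1 : Real.exp (-(Δt' ω / T)) = c * Real.exp ((1/R - Δt' ω)/T) := by
        rw [hc, ← Real.exp_add]
        congr 1
        field_simp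
        ring
      have h2 : 1 + (1/R - Δt' ω)/T ≤ Real.exp ((1/R - Δt' ω)/T) := by
        have := Real.add_one_le_exp ((1/R - Δt' ω)/T)
        linarith
      simp only [hE]
      rw [h1]
      exact mul_le_mul_of_nonneg_left h2 (Real.exp_pos _).le
    have hmono : ∫ ω, c * (1 + (1/R - Δt' ω)/T) ∂μ ≤ ∫ ω, E ω ∂μ :=
      integral_mono hiLin hiE hpt
    have hval : ∫ ω, c * (1 + (1/R - Δt' ω)/T) ∂μ = c := by
      have heq : (fun ω => c * (1 + (1/R - Δt' ω)/T))
          = fun ω => (c + c/(R*T)) - (c/T) * Δt' ω := by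
        funext ω; field_simp; ring
      rw [heq, integral_sub (integrable_const _) (hiΔt'.const_mul _),
        integral_const, integral_const_mul, hmΔt'']
      simp only [measure_univ, ENNReal.toReal_one, probReal_univ, one_smul]
      field_simp
      ring
    linarith [hval ▸ hmono]
  -- finish
  rw [hLHS, hsplit]
  have hM12 : M - 1/2 ≤ 0 := by rw [hM]; linarith
  have : (∫ ω, E ω ∂μ) * (M - 1/2) ≤ c * (M - 1/2) :=
    mul_le_mul_of_nonpos_right hcE hM12
  rw [hM] at this ⊢
  linarith
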